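/- Let A ∈ ℝ^{3×3} be symmetric positive definite with three distinct eigenvalues, and let R ∈ SO(3) satisfy ψ(AR) = 0 (i.e., AR is symmetric). Then either R = I₃ or R = R_a(π, v) for some unit eigenvector v of A. In particular, the set {R ∈ SO(3) : ψ(AR) = 0} consists of exactly four rotations: I₃ and the three rotations by angle π about the eigenvector directions of A. -/

import Mathlib

open Matrix Real

noncomputable def skew (x : Fin 3 → ℝ) : Matrix (Fin 3) (Fin 3) ℝ :=
  !![0, -x 2, x 1; x 2, 0, -x 0; -x 1, x 0, 0]

noncomputable def psi (A : Matrix (Fin 3) (Fin 3) ℝ) : Fin 3 → ℝ :=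
  ![(A 2 1 - A 1 2)/2, (A 0 2 - A 2 0)/2, (A 1 0 - A 0 1)/2]

noncomputable def Ra (θ : ℝ) (u : Fin 3 → ℝ) : Matrix (Fin 3) (Fin 3) ℝ :=
  1 + Real.sin θ • skew u + (1 - Real.cos θ) • (skew u * skew u)

lemma Ra_pi (w : Fin 3 → ℝ) (hw : w ⬝ᵥ w = 1) :
    Ra Real.pi w = Matrix.of (fun a b => 2 * w a * w b) - 1 := by
  have h1 : w 0 * w 0 + w 1 * w 1 + w 2 * w 2 = 1 := by
    simpa [dotProduct, Fin.sum_univ_three] using hw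
  ext a b
  fin_cases a <;> fin_cases b <;>
    simp [Ra, skew, Matrix.mul_apply, Fin.sum_univ_three, Matrix.one_apply,
      Real.sin_pi, Real.cos_pi] <;> nlinarith [h1]

lemma psi_of_symm (M : Matrix (Fin 3) (Fin 3) ℝ) (h : Mᵀ = M) : psi M = 0 := by
  funext i
  have h21 : M 1 2 = M 2 1 := by have := congrFun (congrFun h 1) 2; simpa using this.symm
  have h02 : M 2 0 = M 0 2 := by have := congrFun (congrFun h 2) 0; simpa using this.symm
  have h10 : M 0 1 = M 1 0 := by have := congrFun (congrFun h 0) 1; simpa using this.symm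
  fin_cases i <;> simp [psi] <;> linarith

lemma symm_of_psi (M : Matrix (Fin 3) (Fin 3) ℝ) (h : psi M = 0) : Mᵀ = M := by
  have h0 := congrFun h 0
  have h1 := congrFun h 1
  have h2 := congrFun h 2
  simp [psi] at h0 h1 h2
  ext i j
  fin_cases i <;> fin_cases j <;> simp [Matrix.transpose_apply] <;> linarith

lemma diag_force (lam : Fin 3 → ℝ) (hl0 : 0 < lam 0) (h01 : lam 0 < lam 1) (h12 : lam 1 < lam 2)
    (S : Matrix (Fin 3) (Fin 3) ℝ) (horth : Sᵀ * S = 1) (hdet : S.det = 1)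
    (hsym : ∀ i j, lam i * S i j = lam j * S j i) :
    S = 1 ∨ ∃ k, S = Matrix.diagonal (fun i => if i = k then (1:ℝ) else -1) := by
  have horth' : S * Sᵀ = 1 := mul_eq_one_comm.mp horth
  have col : ∀ j : Fin 3, S 0 j * S 0 j + S 1 j * S 1 j + S 2 j * S 2 j = 1 := by
    intro j
    have := congrFun (congrFun horth j) j
    simpa [Matrix.mul_apply, Fin.sum_univ_three, Matrix.one_apply] using this
  have row : ∀ i : Fin 3, S i 0 * S i 0 + S i 1 * S i 1 + S i 2 * S i 2 = 1 := by
    intro i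
    have := congrFun (congrFun horth' i) i
    simpa [Matrix.mul_apply, Fin.sum_univ_three, Matrix.one_apply] using this
  have hl1 : 0 < lam 1 := hl0.trans h01
  have hl2 : 0 < lam 2 := hl1.trans h12
  have wcol : ∀ i : Fin 3, (lam 0 * S 0 i)^2 + (lam 1 * S 1 i)^2 + (lam 2 * S 2 i)^2 = (lam i)^2 := by
    intro i
    have hr := row i
    rw [← hsym i 0, ← hsym i 1, ← hsym i 2]
    linear_combination (lam i)^2 * hr
  have key2 : (lam 2^2 - lam 0^2) * S 0 2^2 + (lam 2^2 - lam 1^2) * S 1 2^2 = 0 := by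
    linear_combination (lam 2:ℝ)^2 * col 2 - wcol 2
  have p20 : (0:ℝ) < lam 2^2 - lam 0^2 := by nlinarith
  have p21 : (0:ℝ) < lam 2^2 - lam 1^2 := by nlinarith
  have p10 : (0:ℝ) < lam 1^2 - lam 0^2 := by nlinarith
  have h02 : S 0 2 = 0 := by
    have hq : S 0 2 ^ 2 = 0 := le_antisymm
      (by nlinarith [key2, p20, mul_nonneg p21.le (sq_nonneg (S 1 2))]) (sq_nonneg _)
    exact pow_eq_zero_iff (by norm_num) |>.mp hq
  have h12' : S 1 2 = 0 := by
    have hq : S 1 2 ^ 2 = 0 := le_antisymm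
      (by nlinarith [key2, p21, mul_nonneg p20.le (sq_nonneg (S 0 2))]) (sq_nonneg _)
    exact pow_eq_zero_iff (by norm_num) |>.mp hq
  have h20 : S 2 0 = 0 := by
    have h := hsym 0 2; rw [h02, mul_zero] at h
    exact (mul_eq_zero.mp h.symm).resolve_left hl2.ne'
  have h21 : S 2 1 = 0 := by
    have h := hsym 1 2; rw [h12', mul_zero] at h
    exact (mul_eq_zero.mp h.symm).resolve_left hl2.ne'
  have h22 : S 2 2 * S 2 2 = 1 := by
    have h := col 2; rw [h02, h12'] at h; linarith
  have key1 : (lam 1^2 - lam 0^2) * S 0 1^2 + (lam 1^2 - lam 2^2) * S 2 1^2 = 0 := by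
    linear_combination (lam 1:ℝ)^2 * col 1 - wcol 1
  have h01' : S 0 1 = 0 := by
    have key1' := key1
    rw [h21] at key1'
    have hq : S 0 1 ^ 2 = 0 := by
      have : (lam 1 ^ 2 - lam 0 ^ 2) * S 0 1 ^ 2 = 0 := by linarith [key1']
      exact (mul_eq_zero.mp this).resolve_left p10.ne'
    exact pow_eq_zero_iff (by norm_num) |>.mp hq
  have h10 : S 1 0 = 0 := by
    have h := hsym 0 1; rw [h01', mul_zero] at h
    exact (mul_eq_zero.mp h.symm).resolve_left hl1.ne'
  have h11 : S 1 1 * S 1 1 = 1 := by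
    have h := col 1; rw [h01', h21] at h; linarith
  have h00 : S 0 0 * S 0 0 = 1 := by
    have h := col 0; rw [h10, h20] at h; linarith
  have hdetS : S 0 0 * (S 1 1 * S 2 2) = 1 := by
    have hd := hdet
    rw [Matrix.det_fin_three] at hd
    rw [h01', h02, h10, h12', h20, h21] at hd
    linarith [hd]
  have fix : ∀ T : Matrix (Fin 3) (Fin 3) ℝ,
      S 0 0 = T 0 0 → S 1 1 = T 1 1 → S 2 2 = T 2 2 →
      T 0 1 = 0 → T 0 2 = 0 → T 1 0 = 0 → T 1 2 = 0 → T 2 0 = 0 → T 2 1 = 0 → S = T := by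
    intro T e0 e1 e2 t1 t2 t3 t4 t5 t6
    ext i j; fin_cases i <;> fin_cases j
    · exact e0
    · exact h01'.trans t1.symm
    · exact h02.trans t2.symm
    · exact h10.trans t3.symm
    · exact e1
    · exact h12'.trans t4.symm
    · exact h20.trans t5.symm
    · exact h21.trans t6.symm
    · exact e2
  rcases mul_self_eq_one_iff.mp h00 with e0 | e0 <;>
  rcases mul_self_eq_one_iff.mp h11 with e1 | e1 <;>
  rcases mul_self_eq_one_iff.mp h22 with e2 | e2
  · exact Or.inl (fix 1 (by simp [e0]) (by simp [e1]) (by simp [e2]) (by simp) (by simp)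
      (by simp) (by simp) (by simp) (by simp [Matrix.one_apply]))
  · exfalso; rw [e0, e1, e2] at hdetS; norm_num at hdetS
  · exfalso; rw [e0, e1, e2] at hdetS; norm_num at hdetS
  · exact Or.inr ⟨0, fix _ (by simp [Matrix.diagonal, e0]) (by simp [Matrix.diagonal, e1])
      (by simp [Matrix.diagonal, e2]) (by simp [Matrix.diagonal]) (by simp [Matrix.diagonal])
      (by simp [Matrix.diagonal]) (by simp [Matrix.diagonal]) (by simp [Matrix.diagonal]) (by simp [Matrix.diagonal])⟩
  · exfalso; rw [e0, e1, e2] at hdetS; norm_num at hdetS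
  · exact Or.inr ⟨1, fix _ (by simp [Matrix.diagonal, e0]) (by simp [Matrix.diagonal, e1])
      (by simp [Matrix.diagonal, e2]) (by simp [Matrix.diagonal]) (by simp [Matrix.diagonal])
      (by simp [Matrix.diagonal]) (by simp [Matrix.diagonal]) (by simp [Matrix.diagonal]) (by simp [Matrix.diagonal])⟩
  · exact Or.inr ⟨2, fix _ (by simp [Matrix.diagonal, e0]) (by simp [Matrix.diagonal, e1])
      (by simp [Matrix.diagonal, e2]) (by simp [Matrix.diagonal]) (by simp [Matrix.diagonal])
      (by simp [Matrix.diagonal]) (by simp [Matrix.diagonal]) (by simp [Matrix.diagonal]) (by simp [Matrix.diagonal])⟩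
  · exfalso; rw [e0, e1, e2] at hdetS; norm_num at hdetS

theorem stmt12 (A : Matrix (Fin 3) (Fin 3) ℝ) (hsymm : A.IsSymm) (hpd : A.PosDef)
    (lam : Fin 3 → ℝ) (v : Fin 3 → Fin 3 → ℝ)
    (hlam : lam 0 < lam 1 ∧ lam 1 < lam 2)
    (horth : ∀ i j, v i ⬝ᵥ v j = if i = j then 1 else 0)
    (heig : ∀ i, A *ᵥ v i = lam i • v i) :
    (∀ R : Matrix (Fin 3) (Fin 3) ℝ, Rᵀ * R = 1 → R.det = 1 → psi (A * R) = 0 →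
      R = 1 ∨ ∃ w : Fin 3 → ℝ, w ⬝ᵥ w = 1 ∧ (∃ μ : ℝ, A *ᵥ w = μ • w) ∧ R = Ra Real.pi w) ∧
    {R : Matrix (Fin 3) (Fin 3) ℝ | Rᵀ * R = 1 ∧ R.det = 1 ∧ psi (A * R) = 0}
      = {1, Ra Real.pi (v 0), Ra Real.pi (v 1), Ra Real.pi (v 2)} := by
  set V : Matrix (Fin 3) (Fin 3) ℝ := Matrix.of (fun i j => v j i) with hV
  have hVtV : Vᵀ * V = 1 := by
    ext i j
    simp only [Matrix.mul_apply, Matrix.transpose_apply, hV, Matrix.of_apply, Matrix.one_apply]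
    have := horth i j
    simpa [dotProduct] using this
  have hVVt : V * Vᵀ = 1 := mul_eq_one_comm.mp hVtV
  set D : Matrix (Fin 3) (Fin 3) ℝ := Matrix.diagonal lam with hD
  have hAV : A * V = V * D := by
    ext i j
    rw [hD, Matrix.mul_diagonal]
    simp only [Matrix.mul_apply, hV, Matrix.of_apply, Fin.sum_univ_three]
    have h := congrFun (heig j) i
    simp only [Matrix.mulVec, dotProduct, Pi.smul_apply, smul_eq_mul, Fin.sum_univ_three] at h
    linarith [h]
  have hVAV : Vᵀ * A * V = D := by
    calc Vᵀ * A * V = Vᵀ * (A * V) := by rw [Matrix.mul_assoc]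
    _ = Vᵀ * (V * D) := by rw [hAV]
    _ = (Vᵀ * V) * D := by rw [Matrix.mul_assoc]
    _ = D := by rw [hVtV, Matrix.one_mul]
  have hAt : Aᵀ = A := hsymm
  have hlampos : ∀ i, 0 < lam i := by
    intro i
    have hvne : v i ≠ 0 := by
      intro h
      have := horth i i
      rw [h] at this
      simp [dotProduct] at this
    have hpos := hpd.dotProduct_mulVec_pos hvne
    have hp : (0:ℝ) < v i ⬝ᵥ (A *ᵥ v i) := by simpa using hpos
    rw [heig i] at hp
    have hdot : v i ⬝ᵥ (lam i • v i) = lam i := by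
      rw [dotProduct_smul, horth i i]; simp
    rw [hdot] at hp; exact hp
  have hVdV : ∀ k, V * Matrix.diagonal (fun i => if i = k then (1:ℝ) else -1) * Vᵀ
      = Ra Real.pi (v k) := by
    intro k
    rw [Ra_pi (v k) (by simpa using horth k k)]
    ext a b
    have h1 : (1 : Matrix (Fin 3) (Fin 3) ℝ) a b
        = v 0 a * v 0 b + v 1 a * v 1 b + v 2 a * v 2 b := by
      rw [← hVVt]
      simp [Matrix.mul_apply, Fin.sum_univ_three, hV]
    simp only [Matrix.mul_apply, Matrix.diagonal_apply, Matrix.transpose_apply, hV,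
      Matrix.of_apply, Fin.sum_univ_three, Matrix.sub_apply]
    rw [h1]
    fin_cases k <;> simp <;> ring
  have core : ∀ R : Matrix (Fin 3) (Fin 3) ℝ, Rᵀ * R = 1 → R.det = 1 → psi (A * R) = 0 →
      R = 1 ∨ ∃ k, R = Ra Real.pi (v k) := by
    intro R hR hdet hpsi
    have hsymAR : (A * R)ᵀ = A * R := symm_of_psi _ hpsi
    set S : Matrix (Fin 3) (Fin 3) ℝ := Vᵀ * R * V with hS
    have hSt : Sᵀ = Vᵀ * Rᵀ * V := by
      rw [hS]; simp [Matrix.transpose_mul, Matrix.mul_assoc]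
    have hStS : Sᵀ * S = 1 := by
      rw [hSt, hS]
      have e : Vᵀ * Rᵀ * V * (Vᵀ * R * V) = Vᵀ * (Rᵀ * ((V * Vᵀ) * (R * V))) := by
        simp only [Matrix.mul_assoc]
      rw [e, hVVt, Matrix.one_mul, ← Matrix.mul_assoc Rᵀ R V, hR, Matrix.one_mul, hVtV]
    have hdV : V.det * V.det = 1 := by
      have := congrArg Matrix.det hVtV
      simpa [Matrix.det_mul, Matrix.det_transpose] using this
    have hdetS : S.det = 1 := by
      rw [hS]
      simp only [Matrix.det_mul, Matrix.det_transpose, hdet]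
      linear_combination hdV
    have hDS : D * S = Sᵀ * D := by
      have e1 : D * S = Vᵀ * (A * R) * V := by
        rw [hS, ← hVAV]
        have : Vᵀ * A * V * (Vᵀ * R * V) = Vᵀ * (A * ((V * Vᵀ) * (R * V))) := by
          simp only [Matrix.mul_assoc]
        rw [this, hVVt, Matrix.one_mul]
        simp only [Matrix.mul_assoc]
      have e2 : Sᵀ * D = Vᵀ * (A * R)ᵀ * V := by
        rw [hSt, ← hVAV, Matrix.transpose_mul, hAt]
        have : Vᵀ * Rᵀ * V * (Vᵀ * A * V) = Vᵀ * (Rᵀ * ((V * Vᵀ) * (A * V))) := by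
          simp only [Matrix.mul_assoc]
        rw [this, hVVt, Matrix.one_mul]
        simp only [Matrix.mul_assoc]
      rw [e1, e2, hsymAR]
    have hsymS : ∀ i j, lam i * S i j = lam j * S j i := by
      intro i j
      have := congrFun (congrFun hDS i) j
      simp only [hD, Matrix.diagonal_mul, Matrix.mul_diagonal, Matrix.transpose_apply] at this
      rw [this]; ring
    have hRS : R = V * S * Vᵀ := by
      rw [hS]
      have : V * (Vᵀ * R * V) * Vᵀ = (V * Vᵀ) * R * (V * Vᵀ) := by
        simp only [Matrix.mul_assoc]
      rw [this, hVVt, Matrix.one_mul, Matrix.mul_one]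
    rcases diag_force lam (hlampos 0) hlam.1 hlam.2 S hStS hdetS hsymS with h | ⟨k, h⟩
    · left; rw [hRS, h, Matrix.mul_one, hVVt]
    · right; exact ⟨k, by rw [hRS, h, hVdV k]⟩
  have hmem : ∀ k : Fin 3, (Ra Real.pi (v k))ᵀ * Ra Real.pi (v k) = 1 ∧
      (Ra Real.pi (v k)).det = 1 ∧ psi (A * Ra Real.pi (v k)) = 0 := by
    intro k
    set M : Matrix (Fin 3) (Fin 3) ℝ := Matrix.diagonal (fun i => if i = k then (1:ℝ) else -1)
      with hM
    have hMt : Mᵀ = M := Matrix.diagonal_transpose _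
    have hMM : M * M = 1 := by
      rw [hM, Matrix.diagonal_mul_diagonal]
      have : (fun i => (if i = k then (1:ℝ) else -1) * (if i = k then (1:ℝ) else -1))
          = fun _ => (1:ℝ) := by
        funext i; split <;> norm_num
      rw [this, Matrix.diagonal_one]
    have hR : Ra Real.pi (v k) = V * M * Vᵀ := (hVdV k).symm
    refine ⟨?_, ?_, ?_⟩
    · rw [hR]
      have e : (V * M * Vᵀ)ᵀ * (V * M * Vᵀ) = V * (Mᵀ * ((Vᵀ * V) * (M * Vᵀ))) := by
        simp only [Matrix.transpose_mul, Matrix.transpose_transpose, Matrix.mul_assoc]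
      rw [e, hVtV, Matrix.one_mul, hMt, ← Matrix.mul_assoc M M Vᵀ, hMM, Matrix.one_mul, hVVt]
    · rw [hR]
      have hdV : V.det * V.det = 1 := by
        have := congrArg Matrix.det hVtV
        simpa [Matrix.det_mul, Matrix.det_transpose] using this
      have hdM : M.det = 1 := by
        rw [hM, Matrix.det_diagonal, Fin.prod_univ_three]
        fin_cases k <;> norm_num [Fin.ext_iff]
      simp only [Matrix.det_mul, Matrix.det_transpose, hdM]
      linear_combination hdV
    · apply psi_of_symm
      have hDM : D * M = M * D := by
        rw [hD, hM, Matrix.diagonal_mul_diagonal, Matrix.diagonal_mul_diagonal]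
        have e : (fun i => lam i * if i = k then (1:ℝ) else -1)
            = fun i => (if i = k then (1:ℝ) else -1) * lam i := by funext i; ring
        rw [e]
      have hAR : A * Ra Real.pi (v k) = V * (D * M) * Vᵀ := by
        rw [hR, ← Matrix.mul_assoc, ← Matrix.mul_assoc, hAV]
        simp only [Matrix.mul_assoc]
      rw [hAR]
      have e : (V * (D * M) * Vᵀ)ᵀ = V * (D * M)ᵀ * Vᵀ := by
        simp only [Matrix.transpose_mul, Matrix.transpose_transpose, Matrix.mul_assoc]
      rw [e]
      congr 1
      congr 1
      rw [Matrix.transpose_mul, hMt, hD, Matrix.diagonal_transpose, ← hD, hDM]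
  constructor
  · intro R hR hdet hpsi
    rcases core R hR hdet hpsi with h | ⟨k, h⟩
    · exact Or.inl h
    · exact Or.inr ⟨v k, by simpa using horth k k, ⟨lam k, heig k⟩, h⟩
  · ext R
    simp only [Set.mem_setOf_eq, Set.mem_insert_iff, Set.mem_singleton_iff]
    constructor
    · rintro ⟨h1, h2, h3⟩
      rcases core R h1 h2 h3 with h | ⟨k, h⟩
      · exact Or.inl h
      · fin_cases k
        · exact Or.inr (Or.inl h)
        · exact Or.inr (Or.inr (Or.inl h))
        · exact Or.inr (Or.inr (Or.inr h))
    · rintro (rfl | rfl | rfl | rfl)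
      · refine ⟨by simp, by simp, ?_⟩
        apply psi_of_symm
        simpa using hAt
      · exact hmem 0
      · exact hmem 1
      · exact hmem 2
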